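/- Let m ≥ 1 be an integer. Then H_{n,m} = {h ∈ K_{n,m} : h·e₀ = e₀}, where e₀ denotes the (n+1)-st standard basis vector of F^{2n+1}; that is, an element of K_{n,m} lies in the embedded SO_{2n}(F) if and only if it fixes e₀. -/

import Mathlib

open scoped Pointwise

namespace SO2n1Paper

noncomputable section

variable {F : Type} [Field F]

/-- The subset `ϖ^k · 𝔬` of `F`; for `k ≥ 0` this is `𝔭^k`, and for `k < 0` it is the
fractional ideal `𝔭^k` (`ϖ` being a uniformizer of the valuation ring `𝔬`). -/
def pPow (O : ValuationSubring F) (ϖ : F) (k : ℤ) : Set F :=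
  {x | ∃ y ∈ O, x = ϖ ^ k * y}

/-- `x` is a unit of the valuation ring `𝔬`. -/
def isOUnit (O : ValuationSubring F) (x : F) : Prop :=
  x ∈ O ∧ ∃ y ∈ O, x * y = 1

/-- The subset `1 + ϖ^k · 𝔬` of `F`. -/
def onePlusP (O : ValuationSubring F) (ϖ : F) (k : ℕ) : Set F :=
  {x | ∃ y ∈ O, x = 1 + ϖ ^ k * y}

/-- `ϖ` is a uniformizer of `𝔬`: it is nonzero and the nonunits of `𝔬`
(i.e. the maximal ideal `𝔭`) are exactly `ϖ·𝔬`. -/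
def IsUniformizer (O : ValuationSubring F) (ϖ : F) : Prop :=
  ϖ ≠ 0 ∧ ∀ x : F, (x ∈ O ∧ ¬ isOUnit O x) ↔ x ∈ pPow O ϖ 1

/-- The antidiagonal matrix `J_k`. -/
def Jmat (k : ℕ) : Matrix (Fin k) (Fin k) F :=
  Matrix.of fun i j => if (i : ℕ) + (j : ℕ) + 1 = k then 1 else 0

/-- The Gram matrix `S_n` with (n,1,n)-block form `[[0,0,J_n],[0,2,0],[J_n,0,0]]`. -/
def Smat (n : ℕ) : Matrix (Fin (2*n+1)) (Fin (2*n+1)) F :=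
  Matrix.of fun i j =>
    if (i : ℕ) = n ∧ (j : ℕ) = n then 2
    else if (i : ℕ) + (j : ℕ) = 2*n then 1 else 0

/-- `SO_{2n+1}(F) = {g ∈ SL_{2n+1}(F) : ᵗg S_n g = S_n}`, as a set of matrices. -/
def SOodd (n : ℕ) : Set (Matrix (Fin (2*n+1)) (Fin (2*n+1)) F) :=
  {g | g.det = 1 ∧ g.transpose * Smat n * g = Smat n}

/-- `SO_{2r}(F) = {h ∈ SL_{2r}(F) : ᵗh J_{2r} h = J_{2r}}`, as a set of matrices. -/
def SOevenSet (r : ℕ) : Set (Matrix (Fin (2*r)) (Fin (2*r)) F) :=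
  {h | h.det = 1 ∧ h.transpose * Jmat (2*r) * h = Jmat (2*r)}

/-- The central index `n+1` (1-based), i.e. `n` (0-based). -/
def cen (n : ℕ) : Fin (2*n+1) := ⟨n, by omega⟩

/-- The 0-based index corresponding to the 1-based index `ℓ` (for `1 ≤ ℓ ≤ 2n+1`). -/
def idx1 (n ℓ : ℕ) : Fin (2*n+1) := ⟨(ℓ - 1) % (2*n+1), Nat.mod_lt _ (by omega)⟩

/-- The 0-based index corresponding to `ℓ* = 2n+2-ℓ` (1-based), for `1 ≤ ℓ ≤ n`. -/
def idxStar (n ℓ : ℕ) : Fin (2*n+1) := ⟨(2*n+1 - ℓ) % (2*n+1), Nat.mod_lt _ (by omega)⟩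

/-- The root element `x_{ε_ℓ}(y) = I − 2y·E_{ℓ,n+1} + y·E_{n+1,ℓ*} − y²·E_{ℓ,ℓ*}`. -/
def xPos (n ℓ : ℕ) (y : F) : Matrix (Fin (2*n+1)) (Fin (2*n+1)) F :=
  1 - Matrix.single (idx1 n ℓ) (cen n) (2*y)
    + Matrix.single (cen n) (idxStar n ℓ) y
    - Matrix.single (idx1 n ℓ) (idxStar n ℓ) (y^2)

/-- The root element `x_{−ε_ℓ}(y) = I + 2y·E_{ℓ*,n+1} − y·E_{n+1,ℓ} − y²·E_{ℓ*,ℓ}`. -/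
def xNeg (n ℓ : ℕ) (y : F) : Matrix (Fin (2*n+1)) (Fin (2*n+1)) F :=
  1 + Matrix.single (idxStar n ℓ) (cen n) (2*y)
    - Matrix.single (cen n) (idx1 n ℓ) y
    - Matrix.single (idxStar n ℓ) (idx1 n ℓ) (y^2)

/-- The element `w_{ε_ℓ,k} = x_{ε_ℓ}(ϖ^{−k})·x_{−ε_ℓ}(−ϖ^{k})·x_{ε_ℓ}(ϖ^{−k})`. -/
def wEps (n ℓ : ℕ) (ϖ : F) (k : ℕ) : Matrix (Fin (2*n+1)) (Fin (2*n+1)) F :=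
  xPos n ℓ ((ϖ ^ k)⁻¹) * xNeg n ℓ (-(ϖ ^ k)) * xPos n ℓ ((ϖ ^ k)⁻¹)

/-- The exponent pattern of `J_{n,m}`: entry `(i,j)` must lie in `𝔭^(lvl n m i j)`. -/
def lvl (n m : ℕ) (i j : Fin (2*n+1)) : ℤ :=
  if (i : ℕ) < n ∧ n < (j : ℕ) then -(m : ℤ)
  else if (n < (i : ℕ) ∧ (j : ℕ) ≤ n) ∨ ((i : ℕ) = n ∧ (j : ℕ) < n) then (m : ℤ)
  else 0

/-- The open compact subgroup `J_{n,m}` of `SO_{2n+1}(F)` (for `m = 0` this is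
`SO_{2n+1}(F) ∩ GL_{2n+1}(𝔬)`). -/
def Jlevel (O : ValuationSubring F) (ϖ : F) (n m : ℕ) :
    Set (Matrix (Fin (2*n+1)) (Fin (2*n+1)) F) :=
  {g ∈ SOodd n | ∀ i j, g i j ∈ pPow O ϖ (lvl n m i j)}

/-- The open compact subgroup `K_{n,m} = {k ∈ J_{n,m} : k_{n+1,n+1} ∈ 1+𝔭}` (for `m ≥ 1`),
and `K_{n,0} = J_{n,0}`. -/
def Klevel (O : ValuationSubring F) (ϖ : F) (n m : ℕ) :
    Set (Matrix (Fin (2*n+1)) (Fin (2*n+1)) F) :=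
  if m = 0 then Jlevel O ϖ n 0
  else {g ∈ Jlevel O ϖ n m | g (cen n) (cen n) ∈ onePlusP O ϖ 1}

/-- The diagonal matrix `ϖ^{kλ_r}`: first `r` entries `ϖ^k`, last `r` entries `ϖ^{−k}`,
remaining entries `1`. -/
def lamDiag (ϖ : F) (n r : ℕ) (k : ℤ) : Matrix (Fin (2*n+1)) (Fin (2*n+1)) F :=
  Matrix.diagonal fun i =>
    if (i : ℕ) < r then ϖ ^ k else if 2*n+1-r ≤ (i : ℕ) then ϖ ^ (-k) else 1

/-- `K⁰_{n,m} = ϖ^{⌊m/2⌋λ_n} · K_{n,m} · ϖ^{−⌊m/2⌋λ_n}`. -/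
def K0level (O : ValuationSubring F) (ϖ : F) (n m : ℕ) :
    Set (Matrix (Fin (2*n+1)) (Fin (2*n+1)) F) :=
  (fun g => lamDiag ϖ n n ((m / 2 : ℕ) : ℤ) * g * lamDiag ϖ n n (-((m / 2 : ℕ) : ℤ))) ''
    Klevel O ϖ n m

/-- `J⁰_{n,m} = ϖ^{⌊m/2⌋λ_n} · J_{n,m} · ϖ^{−⌊m/2⌋λ_n}`. -/
def J0level (O : ValuationSubring F) (ϖ : F) (n m : ℕ) :
    Set (Matrix (Fin (2*n+1)) (Fin (2*n+1)) F) :=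
  (fun g => lamDiag ϖ n n ((m / 2 : ℕ) : ℤ) * g * lamDiag ϖ n n (-((m / 2 : ℕ) : ℤ))) ''
    Jlevel O ϖ n m

/-- The index translation for the embedding `SO_{2r} ↪ SO_{2n+1}`. -/
def toSmall (n r : ℕ) (i : Fin (2*n+1)) : Option (Fin (2*r)) :=
  if h : (i : ℕ) < r ∧ 0 < r then some ⟨(i : ℕ), by omega⟩
  else if h2 : 2*n+1-r ≤ (i : ℕ) ∧ r ≤ n ∧ 0 < r then
    some ⟨(i : ℕ) - (2*n+1-2*r), by have := i.isLt; omega⟩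
  else none

/-- The embedding `SO_{2r}(F) ↪ SO_{2n+1}(F)` sending `[[a,b],[c,d]]` to
`[[a,0,b],[0,I,0],[c,0,d]]`. -/
def embedSO (n r : ℕ) (h : Matrix (Fin (2*r)) (Fin (2*r)) F) :
    Matrix (Fin (2*n+1)) (Fin (2*n+1)) F :=
  Matrix.of fun i j =>
    match toSmall n r i, toSmall n r j with
    | some a, some b => h a b
    | none, none => if i = j then 1 else 0
    | _, _ => 0

/-- `H_{r,m} = SO_{2r}(F) ∩ K_{n,m}` (with `SO_{2r}(F)` embedded in `SO_{2n+1}(F)`). -/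
def Hlevel (O : ValuationSubring F) (ϖ : F) (n r m : ℕ) :
    Set (Matrix (Fin (2*n+1)) (Fin (2*n+1)) F) :=
  (embedSO n r '' SOevenSet r) ∩ Klevel O ϖ n m

/-- Block index for the partition `(r, 2(n−r)+1, r)` of `2n+1`. -/
def blk (n r : ℕ) (i : Fin (2*n+1)) : ℕ :=
  if (i : ℕ) < r then 0 else if (i : ℕ) < 2*n+1-r then 1 else 2

/-- The opposite maximal parabolic `P̄_{α_r}(F)`: block lower triangular elements of
`SO_{2n+1}(F)` for the partition `(r, 2(n−r)+1, r)`. -/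
def Pbar (n r : ℕ) : Set (Matrix (Fin (2*n+1)) (Fin (2*n+1)) F) :=
  {g ∈ SOodd n | ∀ i j, blk n r i < blk n r j → g i j = 0}

/-- The maximal parabolic `P_{α_r}(F)`: block upper triangular elements of
`SO_{2n+1}(F)` for the partition `(r, 2(n−r)+1, r)`. -/
def Ppara (n r : ℕ) : Set (Matrix (Fin (2*n+1)) (Fin (2*n+1)) F) :=
  {g ∈ SOodd n | ∀ i j, blk n r j < blk n r i → g i j = 0}

/-- The upper triangular Borel subgroup `B_n(F)` of `SO_{2n+1}(F)`. -/
def Bupper (n : ℕ) : Set (Matrix (Fin (2*n+1)) (Fin (2*n+1)) F) :=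
  {g ∈ SOodd n | ∀ i j : Fin (2*n+1), (j : ℕ) < (i : ℕ) → g i j = 0}

/-- The lower triangular Borel subgroup `B̄_n(F)` of `SO_{2n+1}(F)`. -/
def Blower (n : ℕ) : Set (Matrix (Fin (2*n+1)) (Fin (2*n+1)) F) :=
  {g ∈ SOodd n | ∀ i j : Fin (2*n+1), (i : ℕ) < (j : ℕ) → g i j = 0}

/-- `a* = J_r · ᵗa⁻¹ · J_r`. -/
def astar (r : ℕ) (a : Matrix (Fin r) (Fin r) F) : Matrix (Fin r) (Fin r) F :=
  Jmat r * (a⁻¹).transpose * Jmat r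

/-- The block diagonal matrix `diag(a, g₀, a*)` for the partition `(r, 2(n−r)+1, r)`. -/
def leviEmbed (n r : ℕ) (a : Matrix (Fin r) (Fin r) F)
    (g0 : Matrix (Fin (2*(n-r)+1)) (Fin (2*(n-r)+1)) F) :
    Matrix (Fin (2*n+1)) (Fin (2*n+1)) F :=
  Matrix.of fun i j =>
    if hi : (i : ℕ) < r then
      if hj : (j : ℕ) < r then a ⟨i, hi⟩ ⟨j, hj⟩ else 0
    else if hi2 : (i : ℕ) < 2*n+1-r then
      if hj2 : r ≤ (j : ℕ) ∧ (j : ℕ) < 2*n+1-r then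
        g0 ⟨(i : ℕ) - r, by have := i.isLt; omega⟩ ⟨(j : ℕ) - r, by have := j.isLt; omega⟩
      else 0
    else
      if hj3 : 2*n+1-r ≤ (j : ℕ) then
        astar r a ⟨(i : ℕ) - (2*n+1-r), by have := i.isLt; omega⟩
          ⟨(j : ℕ) - (2*n+1-r), by have := j.isLt; omega⟩
      else 0

/-- The Levi subgroup `M_{α_r}(F) = {diag(a, g₀, a*) : a ∈ GL_r(F), g₀ ∈ SO_{2(n−r)+1}(F)}`. -/
def MLevi (n r : ℕ) : Set (Matrix (Fin (2*n+1)) (Fin (2*n+1)) F) :=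
  {g | ∃ (a : Matrix (Fin r) (Fin r) F)
        (g0 : Matrix (Fin (2*(n-r)+1)) (Fin (2*(n-r)+1)) F),
      IsUnit a.det ∧ g0 ∈ SOodd (n - r) ∧ g = leviEmbed n r a g0}

/-- The unipotent radical `N̄_{α_r}(F)` of `P̄_{α_r}(F)`. -/
def NbarUnip (n r : ℕ) : Set (Matrix (Fin (2*n+1)) (Fin (2*n+1)) F) :=
  {g ∈ SOodd n | (∀ i j, blk n r i < blk n r j → g i j = 0) ∧
    ∀ i j, blk n r i = blk n r j → g i j = if i = j then 1 else 0}

/-- The unipotent radical `N_{α_r}(F)` of `P_{α_r}(F)`. -/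
def NUnip (n r : ℕ) : Set (Matrix (Fin (2*n+1)) (Fin (2*n+1)) F) :=
  {g ∈ SOodd n | (∀ i j, blk n r j < blk n r i → g i j = 0) ∧
    ∀ i j, blk n r i = blk n r j → g i j = if i = j then 1 else 0}

/-- `M̄^s_{r,m} = {g ∈ M_{α_r}(F) : s⁻¹·g·u·s ∈ K⁰_{n,m} for some u ∈ N̄_{α_r}(F)}`. -/
def Mbar (O : ValuationSubring F) (ϖ : F) (n r m : ℕ)
    (s : Matrix (Fin (2*n+1)) (Fin (2*n+1)) F) :
    Set (Matrix (Fin (2*n+1)) (Fin (2*n+1)) F) :=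
  {g ∈ MLevi n r | ∃ u ∈ NbarUnip n r, s⁻¹ * (g * u) * s ∈ K0level O ϖ n m}

/-- `M^s_{r,m} = {g ∈ M_{α_r}(F) : s⁻¹·g·u·s ∈ K⁰_{n,m} for some u ∈ N_{α_r}(F)}`. -/
def Mstd (O : ValuationSubring F) (ϖ : F) (n r m : ℕ)
    (s : Matrix (Fin (2*n+1)) (Fin (2*n+1)) F) :
    Set (Matrix (Fin (2*n+1)) (Fin (2*n+1)) F) :=
  {g ∈ MLevi n r | ∃ u ∈ NUnip n r, s⁻¹ * (g * u) * s ∈ K0level O ϖ n m}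

/-- `Γ'_{r,m} ⊆ GL_r(𝔬)`: matrices `a` with `a_{i,r} ∈ 𝔭^m` for `1 ≤ i ≤ r−1` and
`a_{r,r} ∈ 1+𝔭^m` (resp. `a_{r,r} ∈ 𝔬^×` when `m = 0`). -/
def GammaPrime (O : ValuationSubring F) (ϖ : F) (r m : ℕ) :
    Set (Matrix (Fin r) (Fin r) F) :=
  {a | (∀ i j, a i j ∈ O) ∧ isOUnit O a.det ∧
    ∀ i j : Fin r, (j : ℕ) = r - 1 →
      (((i : ℕ) < r - 1 → a i j ∈ pPow O ϖ (m : ℤ)) ∧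
       ((i : ℕ) = r - 1 →
         if m = 0 then isOUnit O (a i j) else a i j ∈ onePlusP O ϖ m))}

/-- `Γ_{r,m} ⊆ GL_r(𝔬)`: matrices `a` with `a_{r,j} ∈ 𝔭^m` for `1 ≤ j ≤ r−1` and
`a_{r,r} ∈ 1+𝔭^m` (resp. `a_{r,r} ∈ 𝔬^×` when `m = 0`). -/
def GammaRS (O : ValuationSubring F) (ϖ : F) (r m : ℕ) :
    Set (Matrix (Fin r) (Fin r) F) :=
  {a | (∀ i j, a i j ∈ O) ∧ isOUnit O a.det ∧
    ∀ i j : Fin r, (i : ℕ) = r - 1 →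
      (((j : ℕ) < r - 1 → a i j ∈ pPow O ϖ (m : ℤ)) ∧
       ((j : ℕ) = r - 1 →
         if m = 0 then isOUnit O (a i j) else a i j ∈ onePlusP O ϖ m))}

section Aux

variable {F : Type} [Field F]

/-- Auxiliary index inclusion `Fin (2n) → Fin (2n+1)` skipping the center. -/
def toBig (n : ℕ) (a : Fin (2*n)) : Fin (2*n+1) :=
  if h : (a : ℕ) < n then ⟨a, by omega⟩ else ⟨(a : ℕ) + 1, by have := a.isLt; omega⟩

lemma toBig_val_ne (n : ℕ) (a : Fin (2*n)) : ((toBig n a : Fin (2*n+1)) : ℕ) ≠ n := by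
  unfold toBig; split <;> simp <;> omega

lemma toBig_lt (n : ℕ) (a : Fin (2*n)) (h : (a : ℕ) < n) : ((toBig n a) : ℕ) = (a : ℕ) := by
  simp [toBig, h]

lemma toBig_ge (n : ℕ) (a : Fin (2*n)) (h : ¬ (a : ℕ) < n) : ((toBig n a) : ℕ) = (a : ℕ) + 1 := by
  simp [toBig, h]

/-- The equivalence `Fin (2n) ⊕ Unit ≃ Fin (2n+1)` used to split off the center. -/
def bigEquiv (n : ℕ) : Fin (2*n) ⊕ Unit ≃ Fin (2*n+1) where
  toFun := Sum.elim (toBig n) fun _ => cen n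
  invFun i :=
    if h : (i : ℕ) < n then Sum.inl ⟨i, by omega⟩
    else if h2 : (i : ℕ) = n then Sum.inr ()
    else Sum.inl ⟨(i : ℕ) - 1, by have := i.isLt; omega⟩
  left_inv := by
    rintro (a | ⟨⟩)
    · by_cases h : (a : ℕ) < n
      · simp [toBig_lt n a h, h]
      · have h1 := toBig_ge n a h
        have := a.isLt
        simp only [Sum.elim_inl, h1]
        rw [dif_neg (by omega), dif_neg (by omega)]
        simp [Fin.ext_iff]
    · simp [cen]
  right_inv := by
    intro i
    by_cases h : (i : ℕ) < n
    · simp only [dif_pos h, Sum.elim_inl]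
      exact Fin.ext (toBig_lt n _ h)
    · by_cases h2 : (i : ℕ) = n
      · simp only [dif_neg h, dif_pos h2, Sum.elim_inr]
        exact Fin.ext (by simp [cen, h2])
      · have := i.isLt
        simp only [dif_neg h, dif_neg h2, Sum.elim_inl]
        refine Fin.ext ?_
        rw [toBig_ge n _ (by simp; omega)]
        simp; omega

lemma toSmall_of_lt (n : ℕ) (hn : 1 ≤ n) (i : Fin (2*n+1)) (h : (i : ℕ) < n) :
    toSmall n n i = some ⟨(i : ℕ), by omega⟩ := by
  unfold toSmall
  rw [dif_pos ⟨h, by omega⟩]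

lemma toSmall_of_eq (n : ℕ) (i : Fin (2*n+1)) (h : (i : ℕ) = n) :
    toSmall n n i = none := by
  unfold toSmall
  rw [dif_neg (by omega), dif_neg (by omega)]

lemma toSmall_of_gt (n : ℕ) (hn : 1 ≤ n) (i : Fin (2*n+1)) (h : n < (i : ℕ)) :
    toSmall n n i = some ⟨(i : ℕ) - 1, by have := i.isLt; omega⟩ := by
  unfold toSmall
  rw [dif_neg (by omega), dif_pos ⟨by have := i.isLt; omega, le_refl n, by omega⟩]
  congr 1
  exact Fin.ext (by simp)

end Aux

end

/-- For `m ≥ 1`, `H_{n,m} = {h ∈ K_{n,m} : h·e₀ = e₀}`, where `e₀` is the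
`(n+1)`-st standard basis vector of `F^{2n+1}`. -/
theorem statement10
    (p : ℕ) [Fact p.Prime] (F : Type) [Field F]
    [Algebra ℚ_[p] F] [FiniteDimensional ℚ_[p] F]
    (O : ValuationSubring F)
    (hO : ∀ x : ℚ_[p], algebraMap ℚ_[p] F x ∈ O ↔ ‖x‖ ≤ 1)
    (ϖ : F) (hϖ : IsUniformizer O ϖ)
    (n : ℕ) (hn : 1 ≤ n)
    (m : ℕ) (hm : 1 ≤ m) :
    Hlevel O ϖ n n m =
      {h ∈ Klevel O ϖ n m | h.mulVec (Pi.single (cen n) 1) = Pi.single (cen n) 1} := by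
  have hch : CharZero F := charZero_of_injective_algebraMap (algebraMap ℚ_[p] F).injective
  have hm0 : m ≠ 0 := by omega
  have hcen : ((cen n : Fin (2*n+1)) : ℕ) = n := rfl
  ext x
  simp only [Hlevel, Set.mem_inter_iff, Set.mem_image, Set.mem_setOf_eq]
  constructor
  · rintro ⟨⟨h', hh', rfl⟩, hK⟩
    refine ⟨hK, ?_⟩
    funext i
    simp only [Matrix.mulVec_single, mul_one, MulOpposite.op_one, one_smul, Matrix.col_apply]
    by_cases hi : i = cen n
    · subst hi
      rw [show (embedSO n n h' : Matrix _ _ F) (cen n) (cen n) = 1 by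
        unfold embedSO
        rw [Matrix.of_apply, toSmall_of_eq n (cen n) hcen]
        simp]
      simp
    · rw [Pi.single_apply, if_neg hi]
      unfold embedSO
      rw [Matrix.of_apply, toSmall_of_eq n (cen n) hcen]
      have hi' : (i : ℕ) ≠ n := fun h => hi (Fin.ext (h.trans hcen.symm))
      rcases Nat.lt_or_ge (i : ℕ) n with h | h
      · rw [toSmall_of_lt n hn i h]
      · rw [toSmall_of_gt n hn i (by omega)]
  · rintro ⟨hK, hfix⟩
    refine ⟨?_, hK⟩
    have hK' := hK
    unfold Klevel at hK'
    rw [if_neg hm0] at hK'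
    have hSO : x ∈ SOodd n := hK'.1.1
    have hS : x.transpose * Smat n * x = Smat n := hSO.2
    have hcol : ∀ i, x i (cen n) = if i = cen n then 1 else 0 := by
      intro i
      have := congrFun hfix i
      simpa [Matrix.mulVec_single, Pi.single_apply] using this
    -- the row condition
    have hS2 : Matrix.vecMul (Pi.single (cen n) (1:F)) (Smat n) = Pi.single (cen n) (2:F) := by
      funext j
      rw [Matrix.single_one_vecMul]
      have hjlt := j.isLt
      rcases eq_or_ne j (cen n) with hj0 | hj0
      · subst hj0
        simp only [Smat, Matrix.row_apply, Matrix.of_apply, hcen, Pi.single_eq_same]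
        rw [if_pos (by trivial)]
      · have hjn : (j : ℕ) ≠ n := fun h => hj0 (Fin.ext (by rw [hcen]; exact h))
        simp only [Smat, Matrix.row_apply, Matrix.of_apply, hcen]
        rw [if_neg (by tauto), if_neg (by omega), Pi.single_apply, if_neg hj0]
    have hxt : Matrix.vecMul (Pi.single (cen n) (1:F)) (x.transpose) = Pi.single (cen n) 1 := by
      funext j
      rw [Matrix.single_one_vecMul, Matrix.row_apply, Matrix.transpose_apply, hcol, Pi.single_apply]
    have hvm : Matrix.vecMul (Pi.single (cen n) (1:F)) (x.transpose * Smat n * x)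
        = Matrix.vecMul (Pi.single (cen n) (1:F)) (Smat n) := by rw [hS]
    rw [← Matrix.vecMul_vecMul, ← Matrix.vecMul_vecMul, hxt, hS2] at hvm
    have hrow : ∀ j, x (cen n) j = if j = cen n then 1 else 0 := by
      intro j
      have h2 := congrFun hvm j
      rw [Matrix.single_vecMul] at h2
      simp only [Pi.single_apply, Pi.smul_apply, Matrix.row_apply, smul_eq_mul] at h2
      have : (2:F) * x (cen n) j = 2 * (if j = cen n then 1 else 0) := by
        rw [h2]; split_ifs <;> ring
      exact mul_left_cancel₀ two_ne_zero this
    set h' : Matrix (Fin (2*n)) (Fin (2*n)) F := x.submatrix (toBig n) (toBig n) with hh'def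
    have hne : ∀ a : Fin (2*n), toBig n a ≠ cen n := by
      intro a h
      exact toBig_val_ne n a (by rw [h, hcen])
    have hsub : x.submatrix ⇑(bigEquiv n) ⇑(bigEquiv n)
        = Matrix.fromBlocks h' 0 0 (1 : Matrix Unit Unit F) := by
      ext (a | u) (b | v)
      · rfl
      · simp only [Matrix.submatrix_apply, bigEquiv, Equiv.coe_fn_mk, Sum.elim_inl,
          Sum.elim_inr, Matrix.fromBlocks_apply₁₂, Matrix.zero_apply]
        rw [hcol, if_neg (hne a)]
      · simp only [Matrix.submatrix_apply, bigEquiv, Equiv.coe_fn_mk, Sum.elim_inl,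
          Sum.elim_inr, Matrix.fromBlocks_apply₂₁, Matrix.zero_apply]
        rw [hrow, if_neg (hne b)]
      · simp only [Matrix.submatrix_apply, bigEquiv, Equiv.coe_fn_mk, Sum.elim_inr,
          Matrix.fromBlocks_apply₂₂]
        rw [hcol, if_pos rfl, Subsingleton.elim u v, Matrix.one_apply_eq]
    have hSsub : (Smat n : Matrix _ _ F).submatrix ⇑(bigEquiv n) ⇑(bigEquiv n)
        = Matrix.fromBlocks (Jmat (2*n)) 0 0 (Matrix.of fun _ _ : Unit => (2:F)) := by
      ext (a | u) (b | v)
      · simp only [Matrix.submatrix_apply, bigEquiv, Equiv.coe_fn_mk, Sum.elim_inl,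
          Matrix.fromBlocks_apply₁₁, Smat, Jmat, Matrix.of_apply]
        have hia := a.isLt; have hib := b.isLt
        rcases Nat.lt_or_ge (a : ℕ) n with ha | ha <;>
          rcases Nat.lt_or_ge (b : ℕ) n with hb | hb <;>
          [rw [toBig_lt n a ha, toBig_lt n b hb];
           rw [toBig_lt n a ha, toBig_ge n b (by omega)];
           rw [toBig_ge n a (by omega), toBig_lt n b hb];
           rw [toBig_ge n a (by omega), toBig_ge n b (by omega)]] <;>
          split_ifs <;> first | rfl | omega
      · simp only [Matrix.submatrix_apply, bigEquiv, Equiv.coe_fn_mk, Sum.elim_inl,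
          Sum.elim_inr, Matrix.fromBlocks_apply₁₂, Matrix.zero_apply, Smat,
          Matrix.of_apply, hcen]
        have := toBig_val_ne n a
        rw [if_neg (by tauto), if_neg (by omega)]
      · simp only [Matrix.submatrix_apply, bigEquiv, Equiv.coe_fn_mk, Sum.elim_inl,
          Sum.elim_inr, Matrix.fromBlocks_apply₂₁, Matrix.zero_apply, Smat,
          Matrix.of_apply, hcen]
        have := toBig_val_ne n b
        rw [if_neg (by tauto), if_neg (by omega)]
      · simp only [Matrix.submatrix_apply, bigEquiv, Equiv.coe_fn_mk, Sum.elim_inr,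
          Matrix.fromBlocks_apply₂₂, Smat, Matrix.of_apply, hcen]
        rw [if_pos (by trivial)]
    have hdet : h'.det = 1 := by
      have hd := Matrix.det_submatrix_equiv_self (bigEquiv n) x
      rw [hsub, Matrix.det_fromBlocks_zero₂₁, hSO.1, Matrix.det_one, mul_one] at hd
      exact hd
    have hJrel : h'.transpose * Jmat (2*n) * h' = Jmat (2*n) := by
      have key : ((x.transpose * Smat n * x).submatrix ⇑(bigEquiv n) ⇑(bigEquiv n))
          = (Smat n : Matrix _ _ F).submatrix ⇑(bigEquiv n) ⇑(bigEquiv n) := by rw [hS]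
      rw [← Matrix.submatrix_mul_equiv (x.transpose * Smat n) x _ (bigEquiv n) _,
        ← Matrix.submatrix_mul_equiv x.transpose (Smat n) _ (bigEquiv n) _] at key
      have hxt2 : x.transpose.submatrix ⇑(bigEquiv n) ⇑(bigEquiv n)
          = (Matrix.fromBlocks h' 0 0 (1 : Matrix Unit Unit F)).transpose := by
        rw [← Matrix.transpose_submatrix, hsub]
      rw [hxt2, hsub, hSsub, Matrix.fromBlocks_transpose,
        Matrix.fromBlocks_multiply, Matrix.fromBlocks_multiply] at key
      have := congrArg Matrix.toBlocks₁₁ key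
      simp only [Matrix.toBlocks_fromBlocks₁₁, Matrix.transpose_zero, Matrix.transpose_one,
        Matrix.mul_zero, Matrix.zero_mul, add_zero, zero_add, Matrix.mul_one,
        Matrix.one_mul] at this
      exact this
    refine ⟨h', ⟨hdet, hJrel⟩, ?_⟩
    ext i j
    have hii := i.isLt; have hjj := j.isLt
    unfold embedSO
    rw [Matrix.of_apply]
    rcases Nat.lt_trichotomy (i : ℕ) n with hi | hi | hi <;>
      rcases Nat.lt_trichotomy (j : ℕ) n with hj | hj | hj
    · rw [toSmall_of_lt n hn i hi, toSmall_of_lt n hn j hj]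
      show x (toBig n ⟨(i:ℕ), by omega⟩) (toBig n ⟨(j:ℕ), by omega⟩) = x i j
      rw [show toBig n ⟨(i:ℕ), by omega⟩ = i from Fin.ext (toBig_lt n _ hi),
        show toBig n ⟨(j:ℕ), by omega⟩ = j from Fin.ext (toBig_lt n _ hj)]
    · rw [toSmall_of_lt n hn i hi, toSmall_of_eq n j hj]
      show (0:F) = x i j
      rw [show j = cen n from Fin.ext hj, hcol, if_neg (fun h => by
        rw [h] at hi; exact absurd hi (by rw [hcen]; omega))]
    · rw [toSmall_of_lt n hn i hi, toSmall_of_gt n hn j hj]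
      show x (toBig n ⟨(i:ℕ), by omega⟩) (toBig n ⟨(j:ℕ)-1, by omega⟩) = x i j
      rw [show toBig n ⟨(i:ℕ), by omega⟩ = i from Fin.ext (toBig_lt n _ hi),
        show toBig n ⟨(j:ℕ)-1, by omega⟩ = j from Fin.ext (by
          rw [toBig_ge n _ (by simp; omega)]; simp; omega)]
    · rw [toSmall_of_eq n i hi, toSmall_of_lt n hn j hj]
      show (0:F) = x i j
      rw [show i = cen n from Fin.ext hi, hrow, if_neg (fun h => by
        rw [h] at hj; exact absurd hj (by rw [hcen]; omega))]
    · rw [toSmall_of_eq n i hi, toSmall_of_eq n j hj]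
      show (if i = j then (1:F) else 0) = x i j
      have hij : i = j := Fin.ext (hi.trans hj.symm)
      rw [if_pos hij, hij, show j = cen n from Fin.ext hj, hcol, if_pos rfl]
    · rw [toSmall_of_eq n i hi, toSmall_of_gt n hn j hj]
      show (0:F) = x i j
      rw [show i = cen n from Fin.ext hi, hrow, if_neg (fun h => by
        rw [h] at hj; exact absurd hj (by rw [hcen]; omega))]
    · rw [toSmall_of_gt n hn i hi, toSmall_of_lt n hn j hj]
      show x (toBig n ⟨(i:ℕ)-1, by omega⟩) (toBig n ⟨(j:ℕ), by omega⟩) = x i j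
      rw [show toBig n ⟨(i:ℕ)-1, by omega⟩ = i from Fin.ext (by
          rw [toBig_ge n _ (by simp; omega)]; simp; omega),
        show toBig n ⟨(j:ℕ), by omega⟩ = j from Fin.ext (toBig_lt n _ hj)]
    · rw [toSmall_of_gt n hn i hi, toSmall_of_eq n j hj]
      show (0:F) = x i j
      rw [show j = cen n from Fin.ext hj, hcol, if_neg (fun h => by
        rw [h] at hi; exact absurd hi (by rw [hcen]; omega))]
    · rw [toSmall_of_gt n hn i hi, toSmall_of_gt n hn j hj]
      show x (toBig n ⟨(i:ℕ)-1, by omega⟩) (toBig n ⟨(j:ℕ)-1, by omega⟩) = x i j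
      rw [show toBig n ⟨(i:ℕ)-1, by omega⟩ = i from Fin.ext (by
          rw [toBig_ge n _ (by simp; omega)]; simp; omega),
        show toBig n ⟨(j:ℕ)-1, by omega⟩ = j from Fin.ext (by
          rw [toBig_ge n _ (by simp; omega)]; simp; omega)]

end SO2n1Paper
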